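/- Let n ≥ 1 and let w be a GL(3,ℝ)-weighting of the hypercube graph Q_n. Then the weight of every closed walk in Q_n equals the identity element of GL(3,ℝ) if and only if w has commutative 2-faces. -/

import Mathlib

open SimpleGraph

/-- The hypercube graph `Q_n` on vertices `Fin n → Bool`, two vertices being
adjacent iff they differ in exactly one coordinate (Hamming distance 1). -/
def Qgraph (n : ℕ) : SimpleGraph (Fin n → Bool) where
  Adj x y := hammingDist x y = 1
  symm := by
    constructor
    intro x y h
    rwa [hammingDist_comm]
  loopless := by
    constructor
    intro x h
    simp [hammingDist_self] at h

/-- A `G`-weighting of `Q_n`: an assignment of elements of `G` to ordered pairs of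
adjacent vertices such that reversing a pair inverts the weight. -/
def IsWeighting {n : ℕ} {G : Type*} [Group G]
    (w : (Fin n → Bool) → (Fin n → Bool) → G) : Prop :=
  ∀ x y, (Qgraph n).Adj x y → w y x = (w x y)⁻¹

/-- The weight of a walk: the ordered product of the weights of its steps. -/
def walkWeight {n : ℕ} {G : Type*} [Group G]
    (w : (Fin n → Bool) → (Fin n → Bool) → G) {u v : Fin n → Bool}
    (p : (Qgraph n).Walk u v) : G :=
  (p.darts.map fun d => w d.toProd.1 d.toProd.2).prod

/-- `w` has commutative 2-faces. -/
def CommutativeTwoFaces {n : ℕ} {G : Type*} [Group G]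
    (w : (Fin n → Bool) → (Fin n → Bool) → G) : Prop :=
  ∀ (x : Fin n → Bool) (i j : Fin n), i ≠ j → x i = false → x j = false →
    w x (Function.update x i true) *
      w (Function.update x i true)
        (Function.update (Function.update x i true) j true) =
    w x (Function.update x j true) *
      w (Function.update x j true)
        (Function.update (Function.update x j true) i true)

namespace QAux

variable {n : ℕ} {G : Type*} [Group G]

lemma adj_update (x : Fin n → Bool) (i : Fin n) :
    (Qgraph n).Adj x (Function.update x i (!x i)) := by
  show hammingDist _ _ = 1
  rw [hammingDist, Finset.card_eq_one]
  refine ⟨i, Finset.eq_singleton_iff_unique_mem.2 ⟨?_, ?_⟩⟩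
  · simp [Function.update_self]
  · intro j hj
    simp only [Finset.mem_filter] at hj
    by_contra hji
    exact hj.2 (by rw [Function.update_of_ne hji])

lemma adj_update' (x : Fin n → Bool) (i : Fin n) (h : x i = false) :
    (Qgraph n).Adj x (Function.update x i true) := by
  have := adj_update x i; rwa [h] at this

lemma adj_iff {x y : Fin n → Bool} :
    (Qgraph n).Adj x y ↔ ∃ i, y = Function.update x i (!x i) := by
  constructor
  · intro h
    have h1 : (Finset.filter (fun i => x i ≠ y i) Finset.univ).card = 1 := h
    rw [Finset.card_eq_one] at h1
    obtain ⟨i, hi⟩ := h1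
    refine ⟨i, funext fun j => ?_⟩
    by_cases hj : j = i
    · subst hj
      have hmem : j ∈ Finset.filter (fun i => x i ≠ y i) Finset.univ := by
        rw [hi]; simp
      simp only [Finset.mem_filter] at hmem
      rw [Function.update_self]
      revert hmem; cases x j <;> cases y j <;> simp
    · have hnm : j ∉ Finset.filter (fun i => x i ≠ y i) Finset.univ := by
        rw [hi]; simpa using hj
      simp only [Finset.mem_filter, Finset.mem_univ, true_and, not_not] at hnm
      rw [Function.update_of_ne hj, hnm]
  · rintro ⟨i, rfl⟩
    exact adj_update x i

/-- weight of the path flipping coordinates of `L` in order, starting at `v`. -/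
def flipProd (w : (Fin n → Bool) → (Fin n → Bool) → G) :
    List (Fin n) → (Fin n → Bool) → G
  | [], _ => 1
  | i :: L, v => w v (Function.update v i (!v i)) * flipProd w L (Function.update v i (!v i))

/-- vertex reached after flipping coordinates of `L` in order. -/
def applyFlips : List (Fin n) → (Fin n → Bool) → (Fin n → Bool)
  | [], v => v
  | i :: L, v => applyFlips L (Function.update v i (!v i))

lemma applyFlips_eq (L : List (Fin n)) (hL : L.Nodup) (v : Fin n → Bool) :
    applyFlips L v = fun j => if j ∈ L then !v j else v j := by
  induction L generalizing v with
  | nil => simp [applyFlips]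
  | cons i L ih =>
    obtain ⟨hi, hnd⟩ := List.nodup_cons.1 hL
    funext j
    rw [applyFlips, ih hnd]
    by_cases hj : j = i
    · subst hj
      simp [hi, Function.update_self]
    · simp [Function.update_of_ne hj, hj, List.mem_cons]

lemma flipProd_append (w : (Fin n → Bool) → (Fin n → Bool) → G)
    (L M : List (Fin n)) (v : Fin n → Bool) :
    flipProd w (L ++ M) v = flipProd w L v * flipProd w M (applyFlips L v) := by
  induction L generalizing v with
  | nil => simp [flipProd, applyFlips]
  | cons i L ih => simp [flipProd, applyFlips, ih, mul_assoc]

/-- Path independence for monotone paths: flipProd depends only on the set. -/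
lemma flipProd_perm (w : (Fin n → Bool) → (Fin n → Bool) → G)
    (hc : CommutativeTwoFaces w) {L L' : List (Fin n)} (hp : L.Perm L') :
    ∀ v : Fin n → Bool, L.Nodup → (∀ j ∈ L, v j = false) →
      flipProd w L v = flipProd w L' v := by
  induction hp with
  | nil => intro v _ _; rfl
  | cons i hp ih =>
    intro v hnd hf
    obtain ⟨hi, hnd'⟩ := List.nodup_cons.1 hnd
    rw [flipProd, flipProd, ih _ hnd' ?_]
    intro j hj
    rw [Function.update_of_ne (by rintro rfl; exact hi hj)]
    exact hf j (List.mem_cons_of_mem _ hj)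
  | swap i j L =>
    intro v hnd hf
    have hji : j ≠ i := by
      intro h; subst h; exact (List.nodup_cons.1 hnd).1 (List.mem_cons_self)
    have hjL : j ∉ L := fun h => ((List.nodup_cons.1 hnd).1 (List.mem_cons_of_mem _ h))
    have hiL : i ∉ L := by
      have := (List.nodup_cons.1 (List.nodup_cons.1 hnd).2).1; exact this
    have hvj : v j = false := hf j (List.mem_cons_self)
    have hvi : v i = false := hf i (List.mem_cons_of_mem _ (List.mem_cons_self))
    -- both paths reach the same vertex after two flips
    have hcomm : Function.update (Function.update v j true) i true
        = Function.update (Function.update v i true) j true :=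
      Function.update_comm hji _ _ _
    simp only [flipProd, hvi, hvj, Bool.not_false,
      Function.update_of_ne hji, Function.update_of_ne (Ne.symm hji), hvi, hvj]
    rw [hcomm, ← mul_assoc, ← mul_assoc, hc v i j (Ne.symm hji) hvi hvj, ← hcomm]
  | trans hp1 hp2 ih1 ih2 =>
    intro v hnd hf
    rw [ih1 v hnd hf, ih2 v (hp1.nodup_iff.1 hnd) fun j hj => hf j (hp1.mem_iff.2 hj)]

variable (w : (Fin n → Bool) → (Fin n → Bool) → G)

/-- list of true coordinates of `x`, in increasing order. -/
def trues (x : Fin n → Bool) : List (Fin n) := (List.finRange n).filter (fun j => x j)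

lemma trues_nodup (x : Fin n → Bool) : (trues x).Nodup :=
  (List.nodup_finRange n).filter _

lemma mem_trues {x : Fin n → Bool} {j : Fin n} : j ∈ trues x ↔ x j = true := by
  simp [trues, List.mem_filter, List.mem_finRange]

/-- the potential. -/
def phi (x : Fin n → Bool) : G := flipProd w (trues x) (fun _ => false)

lemma applyFlips_trues (x : Fin n → Bool) :
    applyFlips (trues x) (fun _ => false) = x := by
  rw [applyFlips_eq _ (trues_nodup x)]
  funext j
  by_cases h : x j = true
  · simp [mem_trues.2 h, h]
  · simp only [Bool.not_eq_true] at h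
    have hnm : j ∉ trues x := fun hm => by simp [mem_trues, h] at hm
    simp [hnm, h]

lemma phi_update (hc : CommutativeTwoFaces w) (x : Fin n → Bool) (i : Fin n)
    (hxi : x i = false) :
    phi w (Function.update x i true) = phi w x * w x (Function.update x i true) := by
  have hi : i ∉ trues x := fun h => by simp [mem_trues, hxi] at h
  have hperm : (trues (Function.update x i true)).Perm (trues x ++ [i]) := by
    apply List.perm_of_nodup_nodup_toFinset_eq (trues_nodup _)
    · exact List.Nodup.append (trues_nodup x) (List.nodup_singleton i)
        (by intro a ha hb; rw [List.mem_singleton] at hb; subst hb; exact hi ha)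
    · ext j
      simp only [List.toFinset_append, Finset.mem_union, List.mem_toFinset, mem_trues,
        List.mem_singleton]
      by_cases hj : j = i
      · subst hj; simp [Function.update_self]
      · simp [Function.update_of_ne hj, hj]
  have hfalse : ∀ j ∈ trues (Function.update x i true), (fun _ => false : Fin n → Bool) j = false :=
    fun _ _ => rfl
  rw [phi, flipProd_perm w hc hperm _ (trues_nodup _) hfalse, flipProd_append,
    applyFlips_trues, flipProd, flipProd]
  simp [phi, hxi]

/-- key edge lemma -/
lemma w_eq (hw : IsWeighting w) (hc : CommutativeTwoFaces w)
    {x y : Fin n → Bool} (h : (Qgraph n).Adj x y) :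
    w x y = (phi w x)⁻¹ * phi w y := by
  obtain ⟨i, rfl⟩ := adj_iff.1 h
  cases hxi : x i with
  | false =>
    simp only [Bool.not_false] at h ⊢
    rw [phi_update w hc x i hxi]
    group
  | true =>
    simp only [Bool.not_true] at h ⊢
    set y := Function.update x i false with hy
    have hyi : y i = false := by simp [hy]
    have hxy : x = Function.update y i true := by
      funext j
      by_cases hj : j = i
      · subst hj; simp [hy, hxi]
      · simp [hy, Function.update_of_ne hj]
    have hadj : (Qgraph n).Adj y (Function.update y i true) := adj_update' y i hyi
    rw [hxy] at h ⊢
    rw [hw y _ hadj, phi_update w hc y i hyi]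
    group

lemma walkWeight_eq (wt : (Fin n → Bool) → (Fin n → Bool) → G)
    (hw : IsWeighting wt) (hc : CommutativeTwoFaces wt)
    {u v : Fin n → Bool} (p : (Qgraph n).Walk u v) :
    walkWeight wt p = (phi wt u)⁻¹ * phi wt v := by
  induction p with
  | nil => simp [walkWeight]
  | cons h p ih =>
    rw [walkWeight, Walk.darts_cons, List.map_cons, List.prod_cons]
    rw [show ((p.darts.map fun d => wt d.toProd.1 d.toProd.2).prod) = walkWeight wt p from rfl, ih]
    rw [w_eq wt hw hc h]
    group

end QAux

theorem weight_closed_walk_eq_one_iff_commutativeTwoFaces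
    (n : ℕ) (hn : 1 ≤ n)
    (w : (Fin n → Bool) → (Fin n → Bool) → Matrix.GeneralLinearGroup (Fin 3) ℝ)
    (hw : IsWeighting w) :
    (∀ (u : Fin n → Bool) (p : (Qgraph n).Walk u u), walkWeight w p = 1) ↔
      CommutativeTwoFaces w := by
  constructor
  · intro hall x i j hij hxi hxj
    set a := Function.update x i true with ha
    set b := Function.update x j true with hb
    set c := Function.update a j true with hc
    have hcomm : Function.update b i true = c :=
      Function.update_comm (Ne.symm hij) true true x
    have hadj1 : (Qgraph n).Adj x a := QAux.adj_update' x i hxi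
    have hadj2 : (Qgraph n).Adj a c := by
      apply QAux.adj_update' a j
      rw [ha, Function.update_of_ne (Ne.symm hij)]; exact hxj
    have hadj3 : (Qgraph n).Adj x b := QAux.adj_update' x j hxj
    have hadj4 : (Qgraph n).Adj b c := by
      rw [← hcomm]
      apply QAux.adj_update' b i
      rw [hb, Function.update_of_ne hij]; exact hxi
    have h1 := hall x
      (Walk.cons hadj1 (Walk.cons hadj2 (Walk.cons hadj4.symm (Walk.cons hadj3.symm Walk.nil))))
    rw [walkWeight] at h1
    simp only [Walk.darts_cons, Walk.darts_nil, List.map_cons, List.map_nil, List.prod_cons,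
      List.prod_nil, mul_one] at h1
    have h2 : w x a * (w a c * ((w b c)⁻¹ * (w x b)⁻¹)) = 1 := by
      rw [← hw b c hadj4, ← hw x b hadj3]; exact h1
    have h3 : w x a * w a c = w x b * w b c := by
      calc w x a * w a c
          = (w x a * (w a c * ((w b c)⁻¹ * (w x b)⁻¹))) * (w x b * w b c) := by group
        _ = 1 * (w x b * w b c) := by rw [h2]
        _ = w x b * w b c := one_mul _
    rw [hcomm]
    exact h3
  · intro hc u p
    rw [QAux.walkWeight_eq w hw hc p]
    group
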